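/- Let n ≥ 2 and r, s positive integers with r | s and s | n. Set Λ_r = Q(A_{n−1}^∨) + ⟨(n/r)ω_1⟩ and Λ_s = Q(A_{n−1}^∨) + ⟨(n/s)ω_1⟩, where ω_1 = ε_1 − (Σ_i ε_i)/n. An integer multiple α(−,−) of the standard scalar product (restricted from V(A_{n−1})) has rational extension integral on Λ_r ⊗ Λ_s if and only if lcm(rs,n)/n divides α. Hence the lattice of S_n-invariant even symmetric integral bilinear forms on Q(A_{n−1}^∨) whose rational extension is integral on Λ_r ⊗ Λ_s... equals ⟨(lcm(rs,n)/n)·(−,−)⟩ after intersecting with the sc-even condition. -/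

import Mathlib

/-- The `i`-th standard basis vector `ε_i` of `ℚ^n`. -/
def stdBasisQ (n : ℕ) (i : Fin n) : Fin n → ℚ := fun k => if k = i then 1 else 0

/-- The coroot lattice `Q(A_{n−1}^∨)`, generated by the elements `ε_i − ε_j`. -/
def rootLatticeA (n : ℕ) : Submodule ℤ (Fin n → ℚ) :=
  Submodule.span ℤ {v : Fin n → ℚ | ∃ i j : Fin n, v = stdBasisQ n i - stdBasisQ n j}

/-- The fundamental coweight `ω_1 = ε_1 − (Σ_i ε_i)/n`. -/
def omegaOne (n : ℕ) : Fin n → ℚ := fun k => (if (k : ℕ) = 0 then 1 else 0) - 1 / n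

/-- `Λ_r = Q(A_{n−1}^∨) + ⟨(n/r)ω_1⟩`, the cocharacter lattice of the maximal torus of
`SL_n/μ_r`. -/
def latticeSL (n r : ℕ) : Submodule ℤ (Fin n → ℚ) :=
  rootLatticeA n ⊔ Submodule.span ℤ {((n : ℚ) / r) • omegaOne n}


def ip {n : ℕ} (x y : Fin n → ℚ) : ℚ := ∑ i, x i * y i

lemma ip_std_std (n : ℕ) (a b : Fin n) :
    ip (stdBasisQ n a) (stdBasisQ n b) = if a = b then 1 else 0 := by
  simp only [ip, stdBasisQ, ite_mul, one_mul, zero_mul, Finset.sum_ite_eq, Finset.mem_univ,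
    if_true]
  simp [eq_comm]

lemma ip_std_omega (n : ℕ) (a : Fin n) : ip (stdBasisQ n a) (omegaOne n) = omegaOne n a := by
  simp [ip, stdBasisQ, ite_mul, Finset.sum_ite_eq]

lemma ip_omega_omega (n : ℕ) (hn : 2 ≤ n) : ip (omegaOne n) (omegaOne n) = 1 - 1 / n := by
  have hn0 : (n : ℚ) ≠ 0 := by positivity
  haveI : NeZero n := ⟨by omega⟩
  have key : ∀ i : Fin n, ((i:ℕ) = 0) ↔ (i = 0) := by
    intro i; rw [Fin.ext_iff]; simp
  have h1 : ∑ i : Fin n, (if (i:ℕ) = 0 then (1:ℚ) else 0) = 1 := by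
    simp only [key]; simp
  have h2 : ∑ i : Fin n, (if (i:ℕ) = 0 then (1:ℚ) else 0) * (if (i:ℕ) = 0 then (1:ℚ) else 0)
      = 1 := by
    simp only [ite_mul, one_mul, zero_mul, key]; simp
  unfold ip omegaOne
  have expand : ∀ i : Fin n,
      ((if (i:ℕ) = 0 then (1:ℚ) else 0) - 1/n) * ((if (i:ℕ) = 0 then (1:ℚ) else 0) - 1/n)
      = (if (i:ℕ) = 0 then (1:ℚ) else 0) * (if (i:ℕ) = 0 then (1:ℚ) else 0)
        - (2/n) * (if (i:ℕ) = 0 then (1:ℚ) else 0) + 1/n^2 := by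
    intro i; ring
  rw [Finset.sum_congr rfl (fun i _ => expand i)]
  rw [Finset.sum_add_distrib, Finset.sum_sub_distrib, h2, ← Finset.mul_sum, h1]
  simp [Finset.card_univ]
  field_simp
  ring

lemma ip_sub_left {n : ℕ} (a b y : Fin n → ℚ) : ip (a - b) y = ip a y - ip b y := by
  simp only [ip, Pi.sub_apply, sub_mul, Finset.sum_sub_distrib]

lemma ip_sub_right {n : ℕ} (x a b : Fin n → ℚ) : ip x (a - b) = ip x a - ip x b := by
  simp only [ip, Pi.sub_apply, mul_sub, Finset.sum_sub_distrib]

lemma ip_qsmul_right {n : ℕ} (x y : Fin n → ℚ) (c : ℚ) : ip x (c • y) = c * ip x y := by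
  simp only [ip, Pi.smul_apply, smul_eq_mul, Finset.mul_sum]
  exact Finset.sum_congr rfl fun i _ => by ring

lemma ip_qsmul_left {n : ℕ} (x y : Fin n → ℚ) (c : ℚ) : ip (c • x) y = c * ip x y := by
  simp only [ip, Pi.smul_apply, smul_eq_mul, Finset.mul_sum]
  exact Finset.sum_congr rfl fun i _ => by ring

lemma ip_zsmul_right {n : ℕ} (x y : Fin n → ℚ) (c : ℤ) : ip x (c • y) = c * ip x y := by
  have : (c : ℚ) • y = c • y := by ext i; simp
  rw [← this, ip_qsmul_right]

lemma ip_zsmul_left {n : ℕ} (x y : Fin n → ℚ) (c : ℤ) : ip (c • x) y = c * ip x y := by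
  have : (c : ℚ) • x = c • x := by ext i; simp
  rw [← this, ip_qsmul_left]

lemma ip_zero_right {n : ℕ} (x : Fin n → ℚ) : ip x 0 = 0 := by simp [ip]
lemma ip_zero_left {n : ℕ} (y : Fin n → ℚ) : ip 0 y = 0 := by simp [ip]

lemma ip_add_right {n : ℕ} (x a b : Fin n → ℚ) : ip x (a + b) = ip x a + ip x b := by
  simp only [ip, Pi.add_apply, mul_add, Finset.sum_add_distrib]

lemma ip_add_left {n : ℕ} (a b y : Fin n → ℚ) : ip (a + b) y = ip a y + ip b y := by
  simp only [ip, Pi.add_apply, add_mul, Finset.sum_add_distrib]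

lemma span_int_right {n : ℕ} (α : ℤ) (x : Fin n → ℚ) (S : Set (Fin n → ℚ))
    (h : ∀ g ∈ S, ∃ m : ℤ, (α : ℚ) * ip x g = m) :
    ∀ y ∈ Submodule.span ℤ S, ∃ m : ℤ, (α : ℚ) * ip x y = m := by
  intro y hy
  induction hy using Submodule.span_induction with
  | mem g hg => exact h g hg
  | zero => exact ⟨0, by simp [ip_zero_right]⟩
  | add a b _ _ ha hb =>
    obtain ⟨ma, hma⟩ := ha; obtain ⟨mb, hmb⟩ := hb
    exact ⟨ma + mb, by rw [ip_add_right]; push_cast; rw [mul_add, hma, hmb]⟩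
  | smul c a _ ha =>
    obtain ⟨ma, hma⟩ := ha
    exact ⟨c * ma, by rw [ip_zsmul_right]; push_cast; rw [← hma]; ring⟩

lemma span_int_left {n : ℕ} (α : ℤ) (y : Fin n → ℚ) (S : Set (Fin n → ℚ))
    (h : ∀ g ∈ S, ∃ m : ℤ, (α : ℚ) * ip g y = m) :
    ∀ x ∈ Submodule.span ℤ S, ∃ m : ℤ, (α : ℚ) * ip x y = m := by
  intro x hx
  induction hx using Submodule.span_induction with
  | mem g hg => exact h g hg
  | zero => exact ⟨0, by simp [ip_zero_left]⟩
  | add a b _ _ ha hb =>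
    obtain ⟨ma, hma⟩ := ha; obtain ⟨mb, hmb⟩ := hb
    exact ⟨ma + mb, by rw [ip_add_left]; push_cast; rw [mul_add, hma, hmb]⟩
  | smul c a _ ha =>
    obtain ⟨ma, hma⟩ := ha
    exact ⟨c * ma, by rw [ip_zsmul_left]; push_cast; rw [← hma]; ring⟩


/-- For `r | s | n`, the multiple `α(−,−)` of the standard scalar product has rational
extension integral on `Λ_r ⊗ Λ_s` if and only if `lcm(rs,n)/n` divides `α`. -/
theorem stmt9 (n r s : ℕ) (hn : 2 ≤ n) (hr : 0 < r) (hrs : r ∣ s) (hsn : s ∣ n)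
    (α : ℤ) :
    (∀ x ∈ latticeSL n r, ∀ y ∈ latticeSL n s,
        ∃ m : ℤ, (α : ℚ) * ∑ i, x i * y i = (m : ℚ)) ↔
      ((Nat.lcm (r * s) n / n : ℕ) : ℤ) ∣ α := by
  have hn0 : 0 < n := by omega
  have hs0 : 0 < s := Nat.pos_of_dvd_of_pos hsn hn0
  have hrn : r ∣ n := hrs.trans hsn
  set g := Nat.gcd (r * s) n with hg
  have hg0 : 0 < g := Nat.gcd_pos_of_pos_right _ hn0
  have hgrs : g ∣ r * s := Nat.gcd_dvd_left _ _
  have hgn : g ∣ n := Nat.gcd_dvd_right _ _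
  have hd : Nat.lcm (r * s) n / n = r * s / g := by
    rw [Nat.lcm, Nat.div_div_eq_div_mul, Nat.mul_div_mul_right _ _ hn0]
  have hQn : (n : ℚ) ≠ 0 := by positivity
  have hQr : (r : ℚ) ≠ 0 := by positivity
  have hQs : (s : ℚ) ≠ 0 := by positivity
  have hQg : (g : ℚ) ≠ 0 := by positivity
  -- cast exact divisions
  have cns : ((n / s : ℕ) : ℚ) = (n : ℚ) / s := Nat.cast_div hsn hQs
  have cnr : ((n / r : ℕ) : ℚ) = (n : ℚ) / r := Nat.cast_div hrn hQr
  have crsg : ((r * s / g : ℕ) : ℚ) = ((r : ℚ) * s) / g := by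
    rw [Nat.cast_div hgrs hQg]; push_cast; ring
  have cng : ((n / g : ℕ) : ℚ) = (n : ℚ) / g := Nat.cast_div hgn hQg
  have genL : ∀ t : ℕ, latticeSL n t =
      Submodule.span ℤ ({v : Fin n → ℚ | ∃ i j : Fin n, v = stdBasisQ n i - stdBasisQ n j}
        ∪ {((n : ℚ) / t) • omegaOne n}) := by
    intro t
    rw [latticeSL, rootLatticeA, Submodule.span_union]
  rw [hd]
  constructor
  · -- forward
    intro h
    have hx : ((n : ℚ) / r) • omegaOne n ∈ latticeSL n r :=
      Submodule.mem_sup_right (Submodule.subset_span (Set.mem_singleton _))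
    have hy : ((n : ℚ) / s) • omegaOne n ∈ latticeSL n s :=
      Submodule.mem_sup_right (Submodule.subset_span (Set.mem_singleton _))
    obtain ⟨m, hm⟩ := h _ hx _ hy
    have hm' : (α : ℚ) * ((n : ℚ) / r * ((n : ℚ) / s * (1 - 1 / n))) = m := by
      rw [← hm]
      show _ = (α : ℚ) * ip _ _
      rw [ip_qsmul_left, ip_qsmul_right, ip_omega_omega n hn]
    have key : (α : ℚ) * n * ((n : ℚ) - 1) = (m : ℚ) * r * s := by
      field_simp at hm'
      have h2 : ((α : ℚ) * n * ((n : ℚ) - 1)) * n = ((m : ℚ) * r * s) * n := by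
        linear_combination (n : ℚ) * hm'
      exact mul_right_cancel₀ hQn h2
    have keyZ : α * n * ((n : ℤ) - 1) = m * r * s := by exact_mod_cast key
    have hdvd1 : ((r : ℤ) * s) ∣ (α * n) * ((n : ℤ) - 1) := ⟨m, by linarith [keyZ]⟩
    have hcop : Nat.Coprime (r * s) (n - 1) := by
      have hnc : Nat.Coprime n (n - 1) := by
        have : n - 1 + 1 = n := by omega
        rw [← this]
        simp [Nat.Coprime]
      exact Nat.Coprime.mul (hnc.coprime_dvd_left hrn) (hnc.coprime_dvd_left hsn)
    have hcopZ : IsCoprime ((r : ℤ) * s) ((n : ℤ) - 1) := by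
      have := Nat.isCoprime_iff_coprime.mpr hcop
      have hcast : ((n - 1 : ℕ) : ℤ) = (n : ℤ) - 1 := by
        push_cast [Nat.cast_sub (by omega : 1 ≤ n)]; ring
      rw [Nat.cast_mul, hcast] at this
      exact this
    have hdvd2 : ((r : ℤ) * s) ∣ α * n := hcopZ.dvd_of_dvd_mul_right hdvd1
    obtain ⟨c, hc⟩ := hdvd2
    -- divide by g
    have hng : (n : ℤ) = ((n / g : ℕ) : ℤ) * g := by
      exact_mod_cast (Nat.div_mul_cancel hgn).symm
    have hrsg : (r : ℤ) * s = ((r * s / g : ℕ) : ℤ) * g := by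
      exact_mod_cast (Nat.div_mul_cancel hgrs).symm
    have hgZ : (g : ℤ) ≠ 0 := by exact_mod_cast hg0.ne'
    have hc' : α * ((n / g : ℕ) : ℤ) = ((r * s / g : ℕ) : ℤ) * c := by
      have : (α * ((n / g : ℕ) : ℤ)) * g = (((r * s / g : ℕ) : ℤ) * c) * g := by
        rw [mul_assoc α]
        rw [← hng]
        rw [hc, hrsg]; ring
      exact mul_right_cancel₀ hgZ this
    have hcop2 : IsCoprime ((r * s / g : ℕ) : ℤ) ((n / g : ℕ) : ℤ) :=
      Nat.isCoprime_iff_coprime.mpr (Nat.coprime_div_gcd_div_gcd hg0)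
    exact hcop2.dvd_of_dvd_mul_right ⟨c, hc'⟩
  · -- backward
    intro hdvd x hx y hy
    obtain ⟨β, hβ⟩ := hdvd
    rw [genL] at hx hy
    show ∃ m : ℤ, (α : ℚ) * ip x y = m
    refine span_int_left α y _ ?_ x hx
    intro g1 hg1
    refine span_int_right α g1 _ ?_ y hy
    intro g2 hg2
    -- generator cases
    rcases hg1 with ⟨i, j, rfl⟩ | hg1
    · rcases hg2 with ⟨k, l, rfl⟩ | hg2
      · refine ⟨α * (((if i = k then 1 else 0) - (if i = l then 1 else 0))
          - ((if j = k then 1 else 0) - (if j = l then 1 else 0))), ?_⟩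
        rw [ip_sub_left, ip_sub_right, ip_sub_right, ip_std_std, ip_std_std, ip_std_std,
          ip_std_std]
        push_cast
        split_ifs <;> ring
      · rw [Set.mem_singleton_iff] at hg2; subst hg2
        refine ⟨α * ((n / s : ℕ) : ℤ) * ((if (i : ℕ) = 0 then 1 else 0)
          - (if (j : ℕ) = 0 then 1 else 0)), ?_⟩
        rw [ip_qsmul_right, ip_sub_left, ip_std_omega, ip_std_omega]
        simp only [Int.cast_mul, Int.cast_natCast, cns]
        push_cast [cns]
        simp only [omegaOne]
        split_ifs <;> field_simp <;> ring
    · rw [Set.mem_singleton_iff] at hg1; subst hg1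
      rcases hg2 with ⟨k, l, rfl⟩ | hg2
      · refine ⟨α * ((n / r : ℕ) : ℤ) * ((if (k : ℕ) = 0 then 1 else 0)
          - (if (l : ℕ) = 0 then 1 else 0)), ?_⟩
        have hsymm : ip (((n : ℚ) / r) • omegaOne n) (stdBasisQ n k - stdBasisQ n l)
            = ((n : ℚ) / r) * (omegaOne n k - omegaOne n l) := by
          rw [ip_qsmul_left, ip_sub_right]
          have h1 : ip (omegaOne n) (stdBasisQ n k) = omegaOne n k := by
            rw [show ip (omegaOne n) (stdBasisQ n k) = ip (stdBasisQ n k) (omegaOne n) from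
              Finset.sum_congr rfl fun i _ => mul_comm _ _, ip_std_omega]
          have h2 : ip (omegaOne n) (stdBasisQ n l) = omegaOne n l := by
            rw [show ip (omegaOne n) (stdBasisQ n l) = ip (stdBasisQ n l) (omegaOne n) from
              Finset.sum_congr rfl fun i _ => mul_comm _ _, ip_std_omega]
          rw [h1, h2]
        rw [hsymm]
        simp only [Int.cast_mul, Int.cast_natCast, cnr]
        push_cast [cnr]
        simp only [omegaOne]
        split_ifs <;> field_simp <;> ring
      · rw [Set.mem_singleton_iff] at hg2; subst hg2
        refine ⟨β * ((n / g : ℕ) : ℤ) * ((n : ℤ) - 1), ?_⟩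
        rw [ip_qsmul_left, ip_qsmul_right, ip_omega_omega n hn]
        rw [hβ]
        rw [Int.cast_mul, Int.cast_natCast, crsg, Int.cast_mul, Int.cast_sub, Int.cast_mul,
          Int.cast_natCast, cng, Int.cast_natCast, Int.cast_one]
        field_simp
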